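/- Let s ≥ 1, let y_1,…,y_s ∈ ℝ, let γ > 0 and λ ≥ 0. Then min_{α ≥ 0} Cost(y_{1:s}, α; γ) equals the minimum, over all integers k ≥ 0 and all changepoint vectors 0 = τ_0 < τ_1 < … < τ_k < τ_{k+1} = s, of Σ_{j=0}^{k} min_{α ≥ 0} { (1/2) Σ_{t=τ_j+1}^{τ_{j+1}} (y_t − α γ^{t−τ_{j+1}})² } + λk; that is, minimizing Cost over the terminal amplitude yields the unconstrained changepoint objective in which each segment's amplitude is optimized separately. -/

import Mathlib

/-- Segment cost `D(a, b, α) = (1/2) ∑_{t=a+1}^{b} (y_t − α γ^{t−b})²`. -/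
noncomputable def segCost (y : ℕ → ℝ) (γ : ℝ) (a b : ℕ) (α : ℝ) : ℝ :=
  (1/2) * ∑ t ∈ Finset.Icc (a+1) b, (y t - α * γ ^ ((t : ℤ) - (b : ℤ)))^2

/-- `τ` is a segmentation of the interval `{a+1,…,b}` with `k` changepoints:
`a = τ 0 < τ 1 < … < τ k < τ (k+1) = b`. -/
def IsSeg (a b k : ℕ) (τ : ℕ → ℕ) : Prop :=
  τ 0 = a ∧ τ (k+1) = b ∧ ∀ j ≤ k, τ j < τ (j+1)

/-- Changepoint objective with per-segment amplitudes:
`∑_{j=0}^{k} D(τ_j, τ_{j+1}, α_j) + λ k`. -/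
noncomputable def objAmp (y : ℕ → ℝ) (γ lam : ℝ) (k : ℕ) (τ : ℕ → ℕ) (α : ℕ → ℝ) : ℝ :=
  (∑ j ∈ Finset.range (k+1), segCost y γ (τ j) (τ (j+1)) (α j)) + lam * k

/-- `F(τ)`: the optimal cost of segmenting the first `τ` data points
(minimum of the changepoint objective over segmentations and nonnegative
amplitudes), with the convention `F(0) = −λ`. -/
noncomputable def Fval (y : ℕ → ℝ) (γ lam : ℝ) : ℕ → ℝ
  | 0 => -lam
  | s+1 => sInf { c | ∃ (k : ℕ) (τ : ℕ → ℕ) (a : ℕ → ℝ), IsSeg 0 (s+1) k τ ∧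
      (∀ j ≤ k, 0 ≤ a j) ∧ c = objAmp y γ lam k τ a }

/-- `Cost(y_{1:s}, α; γ) = min_{0 ≤ τ < s} { F(τ) + D(τ, s, α) + λ }`. -/
noncomputable def Cost (y : ℕ → ℝ) (γ lam : ℝ) (s : ℕ) (α : ℝ) : ℝ :=
  sInf { c | ∃ τ : ℕ, τ < s ∧ c = Fval y γ lam τ + segCost y γ τ s α + lam }

/-- Optimal segment cost `min_{α ≥ 0} D(a, b, α)`. -/
noncomputable def segMin (y : ℕ → ℝ) (γ : ℝ) (a b : ℕ) : ℝ :=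
  sInf { c | ∃ α : ℝ, 0 ≤ α ∧ c = segCost y γ a b α }

/-- Changepoint objective with each segment's amplitude optimized separately:
`∑_{j=0}^{k} min_{α ≥ 0} D(τ_j, τ_{j+1}, α) + λ k`. -/
noncomputable def objOpt (y : ℕ → ℝ) (γ lam : ℝ) (k : ℕ) (τ : ℕ → ℕ) : ℝ :=
  (∑ j ∈ Finset.range (k+1), segMin y γ (τ j) (τ (j+1))) + lam * k

/- ### Auxiliary lemmas -/

lemma segCost_nonneg (y : ℕ → ℝ) (γ : ℝ) (a b : ℕ) (α : ℝ) : 0 ≤ segCost y γ a b α := by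
  unfold segCost
  have h : 0 ≤ ∑ t ∈ Finset.Icc (a+1) b, (y t - α * γ ^ ((t : ℤ) - (b : ℤ)))^2 :=
    Finset.sum_nonneg fun t _ => sq_nonneg _
  linarith

lemma segMin_bdd (y : ℕ → ℝ) (γ : ℝ) (a b : ℕ) :
    BddBelow {c | ∃ α : ℝ, 0 ≤ α ∧ c = segCost y γ a b α} := by
  refine ⟨0, ?_⟩
  rintro c ⟨α, -, rfl⟩
  exact segCost_nonneg y γ a b α

lemma segMin_le (y : ℕ → ℝ) (γ : ℝ) (a b : ℕ) {α : ℝ} (hα : 0 ≤ α) :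
    segMin y γ a b ≤ segCost y γ a b α :=
  csInf_le (segMin_bdd y γ a b) ⟨α, hα, rfl⟩

lemma segMin_nonneg (y : ℕ → ℝ) (γ : ℝ) (a b : ℕ) : 0 ≤ segMin y γ a b := by
  refine le_csInf ⟨segCost y γ a b 0, 0, le_rfl, rfl⟩ ?_
  rintro c ⟨α, -, rfl⟩
  exact segCost_nonneg y γ a b α

lemma objAmp_nonneg (y : ℕ → ℝ) (γ : ℝ) {lam : ℝ} (hlam : 0 ≤ lam) (k : ℕ) (τ : ℕ → ℕ)
    (a : ℕ → ℝ) : 0 ≤ objAmp y γ lam k τ a := by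
  unfold objAmp
  have h1 : 0 ≤ ∑ j ∈ Finset.range (k+1), segCost y γ (τ j) (τ (j+1)) (a j) :=
    Finset.sum_nonneg fun j _ => segCost_nonneg y γ _ _ _
  have h2 : (0:ℝ) ≤ lam * k := mul_nonneg hlam (Nat.cast_nonneg k)
  linarith

lemma objOpt_nonneg (y : ℕ → ℝ) (γ : ℝ) {lam : ℝ} (hlam : 0 ≤ lam) (k : ℕ) (τ : ℕ → ℕ) :
    0 ≤ objOpt y γ lam k τ := by
  unfold objOpt
  have h1 : 0 ≤ ∑ j ∈ Finset.range (k+1), segMin y γ (τ j) (τ (j+1)) :=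
    Finset.sum_nonneg fun j _ => segMin_nonneg y γ _ _
  have h2 : (0:ℝ) ≤ lam * k := mul_nonneg hlam (Nat.cast_nonneg k)
  linarith

/-- The trivial one-segment segmentation. -/
def oneSeg (b : ℕ) : ℕ → ℕ := fun j => if j = 0 then 0 else b

lemma isSeg_oneSeg (n : ℕ) : IsSeg 0 (n+1) 0 (oneSeg (n+1)) := by
  refine ⟨by simp [oneSeg], by simp [oneSeg], ?_⟩
  intro j hj
  interval_cases j
  simp [oneSeg]

lemma Fval_nonempty (y : ℕ → ℝ) (γ lam : ℝ) (n : ℕ) :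
    Set.Nonempty { c | ∃ (k : ℕ) (τ : ℕ → ℕ) (a : ℕ → ℝ), IsSeg 0 (n+1) k τ ∧
      (∀ j ≤ k, 0 ≤ a j) ∧ c = objAmp y γ lam k τ a } :=
  ⟨_, 0, oneSeg (n+1), fun _ => 0, isSeg_oneSeg n, fun _ _ => le_rfl, rfl⟩

lemma Fval_succ_nonneg (y : ℕ → ℝ) (γ : ℝ) {lam : ℝ} (hlam : 0 ≤ lam) (n : ℕ) :
    0 ≤ Fval y γ lam (n+1) := by
  rw [Fval]
  refine le_csInf (Fval_nonempty y γ lam n) ?_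
  rintro c ⟨k, τ, a, -, -, rfl⟩
  exact objAmp_nonneg y γ hlam k τ a

lemma Fval_le (y : ℕ → ℝ) (γ : ℝ) {lam : ℝ} (hlam : 0 ≤ lam) (n k : ℕ) (τ : ℕ → ℕ)
    (a : ℕ → ℝ) (hseg : IsSeg 0 (n+1) k τ) (ha : ∀ j ≤ k, 0 ≤ a j) :
    Fval y γ lam (n+1) ≤ objAmp y γ lam k τ a := by
  rw [Fval]
  refine csInf_le ⟨0, ?_⟩ ⟨k, τ, a, hseg, ha, rfl⟩
  rintro c ⟨k', τ', a', -, -, rfl⟩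
  exact objAmp_nonneg y γ hlam k' τ' a'

lemma Cost_elem_nonneg (y : ℕ → ℝ) (γ : ℝ) {lam : ℝ} (hlam : 0 ≤ lam) (s : ℕ) (α : ℝ) :
    ∀ c ∈ {c | ∃ τ : ℕ, τ < s ∧ c = Fval y γ lam τ + segCost y γ τ s α + lam}, (0:ℝ) ≤ c := by
  rintro c ⟨τ, -, rfl⟩
  have hD := segCost_nonneg y γ τ s α
  cases τ with
  | zero =>
    have hF : Fval y γ lam 0 = -lam := rfl
    rw [hF]; linarith
  | succ n =>
    have hF := Fval_succ_nonneg y γ hlam n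
    linarith

lemma Cost_le (y : ℕ → ℝ) (γ : ℝ) {lam : ℝ} (hlam : 0 ≤ lam) (s τ : ℕ) (hτ : τ < s)
    (α : ℝ) : Cost y γ lam s α ≤ Fval y γ lam τ + segCost y γ τ s α + lam :=
  csInf_le ⟨0, Cost_elem_nonneg y γ hlam s α⟩ ⟨τ, hτ, rfl⟩

lemma Cost_nonneg (y : ℕ → ℝ) (γ : ℝ) {lam : ℝ} (hlam : 0 ≤ lam) {s : ℕ} (hs : 0 < s)
    (α : ℝ) : 0 ≤ Cost y γ lam s α :=
  le_csInf ⟨_, 0, hs, rfl⟩ (Cost_elem_nonneg y γ hlam s α)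

/-- For `s ≥ 1`, `γ > 0`, `λ ≥ 0`, minimizing `Cost(y_{1:s}, α; γ)` over
`α ≥ 0` yields the unconstrained changepoint objective with each segment's amplitude
optimized separately. -/
theorem min_cost_eq_changepoint (s : ℕ) (hs : 1 ≤ s) (y : ℕ → ℝ)
    (γ lam : ℝ) (hγ : 0 < γ) (hlam : 0 ≤ lam) :
    sInf { c | ∃ α : ℝ, 0 ≤ α ∧ c = Cost y γ lam s α } =
      sInf { c | ∃ (k : ℕ) (τ : ℕ → ℕ), IsSeg 0 s k τ ∧ c = objOpt y γ lam k τ } := by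
  obtain ⟨n, rfl⟩ : ∃ n, s = n + 1 := ⟨s - 1, by omega⟩
  have hBlb : ∀ c ∈ { c | ∃ (k : ℕ) (τ : ℕ → ℕ), IsSeg 0 (n+1) k τ ∧
      c = objOpt y γ lam k τ }, (0:ℝ) ≤ c := by
    rintro c ⟨k, τ, -, rfl⟩
    exact objOpt_nonneg y γ hlam k τ
  apply le_antisymm
  · -- sInf over α ≤ sInf over segmentations
    refine le_csInf ⟨_, 0, oneSeg (n+1), isSeg_oneSeg n, rfl⟩ ?_
    rintro c ⟨k, τ, hseg, rfl⟩
    refine le_of_forall_pos_le_add ?_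
    intro ε hε
    -- pick near-optimal amplitudes
    have hch : ∀ j : ℕ, ∃ α : ℝ, 0 ≤ α ∧
        segCost y γ (τ j) (τ (j+1)) α < segMin y γ (τ j) (τ (j+1)) + ε / (k+1) := by
      intro j
      have hne : Set.Nonempty {c | ∃ α : ℝ, 0 ≤ α ∧ c = segCost y γ (τ j) (τ (j+1)) α} :=
        ⟨_, 0, le_rfl, rfl⟩
      have hpos : 0 < ε / (k+1) := by positivity
      obtain ⟨c, ⟨α, hα, rfl⟩, hlt⟩ := Real.lt_sInf_add_pos hne hpos
      exact ⟨α, hα, hlt⟩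
    choose a ha hlt using hch
    have hsum : objAmp y γ lam k τ a ≤ objOpt y γ lam k τ + ε := by
      unfold objAmp objOpt
      have h1 : ∑ j ∈ Finset.range (k+1), segCost y γ (τ j) (τ (j+1)) (a j)
          ≤ ∑ j ∈ Finset.range (k+1), (segMin y γ (τ j) (τ (j+1)) + ε/(k+1)) :=
        Finset.sum_le_sum fun j _ => (hlt j).le
      rw [Finset.sum_add_distrib, Finset.sum_const, Finset.card_range] at h1
      have h2 : (k+1 : ℕ) • (ε/(k+1)) = ε := by
        rw [nsmul_eq_mul]
        field_simp
        exact Nat.cast_succ k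
      rw [h2] at h1
      linarith
    have hτs : τ k < n + 1 := by
      have h := hseg.2.2 k le_rfl
      rw [hseg.2.1] at h
      exact h
    have hCost : Cost y γ lam (n+1) (a k) ≤ objAmp y γ lam k τ a := by
      cases k with
      | zero =>
        have h0 : τ 0 = 0 := hseg.1
        have h1 : τ 1 = n + 1 := hseg.2.1
        have hobj : objAmp y γ lam 0 τ a = segCost y γ 0 (n+1) (a 0) := by
          unfold objAmp
          rw [Finset.sum_range_one, h0, h1]
          simp
        have hle := Cost_le y γ hlam (n+1) 0 (by omega) (a 0)
        have hF : Fval y γ lam 0 = -lam := rfl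
        rw [hF] at hle
        rw [hobj]
        linarith
      | succ m =>
        have h1 : τ (m+1) < n+1 := hτs
        have h2 : 1 ≤ τ (m+1) := by
          have := hseg.2.2 m (by omega)
          omega
        obtain ⟨p, hp⟩ : ∃ p, τ (m+1) = p + 1 := ⟨τ (m+1) - 1, by omega⟩
        have hsub : IsSeg 0 (p+1) m τ := ⟨hseg.1, hp, fun j hj => hseg.2.2 j (by omega)⟩
        have hFle : Fval y γ lam (τ (m+1)) ≤ objAmp y γ lam m τ a := by
          rw [hp]
          exact Fval_le y γ hlam p m τ a hsub (fun j _ => ha j)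
        have hle := Cost_le y γ hlam (n+1) (τ (m+1)) h1 (a (m+1))
        have hsplit : objAmp y γ lam (m+1) τ a =
            objAmp y γ lam m τ a + segCost y γ (τ (m+1)) (n+1) (a (m+1)) + lam := by
          unfold objAmp
          rw [Finset.sum_range_succ, hseg.2.1]
          push_cast
          ring
        rw [hsplit]
        linarith
    have hA : sInf {c | ∃ α : ℝ, 0 ≤ α ∧ c = Cost y γ lam (n+1) α}
        ≤ Cost y γ lam (n+1) (a k) := by
      refine csInf_le ⟨0, ?_⟩ ⟨a k, ha k, rfl⟩
      rintro c ⟨α, hα, rfl⟩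
      exact Cost_nonneg y γ hlam (by omega) α
    linarith
  · -- sInf over segmentations ≤ sInf over α
    refine le_csInf ⟨_, 0, le_rfl, rfl⟩ ?_
    rintro c ⟨α, hα, rfl⟩
    refine le_csInf ⟨_, 0, by omega, rfl⟩ ?_
    rintro c ⟨τ', hτ', rfl⟩
    cases τ' with
    | zero =>
      have hB : sInf { c | ∃ (k : ℕ) (τ : ℕ → ℕ), IsSeg 0 (n+1) k τ ∧
          c = objOpt y γ lam k τ } ≤ objOpt y γ lam 0 (oneSeg (n+1)) :=
        csInf_le ⟨0, hBlb⟩ ⟨0, oneSeg (n+1), isSeg_oneSeg n, rfl⟩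
      have hopt : objOpt y γ lam 0 (oneSeg (n+1)) ≤ segCost y γ 0 (n+1) α := by
        unfold objOpt
        rw [Finset.sum_range_one]
        have h1 : oneSeg (n+1) 0 = 0 := by simp [oneSeg]
        have h2 : oneSeg (n+1) 1 = n + 1 := by simp [oneSeg]
        rw [h1, h2]
        have := segMin_le y γ 0 (n+1) hα
        simp only [Nat.cast_zero, mul_zero, add_zero]
        exact this
      have hF : Fval y γ lam 0 = -lam := rfl
      rw [hF]
      linarith
    | succ p =>
      have key : sInf { c | ∃ (k : ℕ) (τ : ℕ → ℕ), IsSeg 0 (n+1) k τ ∧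
            c = objOpt y γ lam k τ } - segCost y γ (p+1) (n+1) α - lam
          ≤ Fval y γ lam (p+1) := by
        rw [Fval]
        refine le_csInf (Fval_nonempty y γ lam p) ?_
        rintro e ⟨k, τ, a, hseg, ha, rfl⟩
        set τ'' : ℕ → ℕ := fun j => if j = k+2 then n+1 else τ j with hτ''
        have hseg'' : IsSeg 0 (n+1) (k+1) τ'' := by
          refine ⟨?_, ?_, ?_⟩
          · simp only [hτ'', if_neg (by omega : 0 ≠ k+2)]
            exact hseg.1
          · simp [hτ'']
          · intro j hj
            rcases Nat.lt_or_ge j (k+1) with h | h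
            · simp only [hτ'', if_neg (by omega : j ≠ k+2), if_neg (by omega : j+1 ≠ k+2)]
              exact hseg.2.2 j (by omega)
            · have hjk : j = k+1 := by omega
              subst hjk
              simp only [hτ'', if_neg (by omega : k+1 ≠ k+2), if_pos rfl]
              rw [hseg.2.1]
              exact hτ'
        have hB : sInf { c | ∃ (k : ℕ) (τ : ℕ → ℕ), IsSeg 0 (n+1) k τ ∧
            c = objOpt y γ lam k τ } ≤ objOpt y γ lam (k+1) τ'' :=
          csInf_le ⟨0, hBlb⟩ ⟨k+1, τ'', hseg'', rfl⟩
        have hsplit : objOpt y γ lam (k+1) τ''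
            ≤ objAmp y γ lam k τ a + segCost y γ (p+1) (n+1) α + lam := by
          unfold objOpt objAmp
          rw [Finset.sum_range_succ]
          have hcong : ∑ j ∈ Finset.range (k+1), segMin y γ (τ'' j) (τ'' (j+1))
              = ∑ j ∈ Finset.range (k+1), segMin y γ (τ j) (τ (j+1)) := by
            refine Finset.sum_congr rfl ?_
            intro j hj
            rw [Finset.mem_range] at hj
            simp only [hτ'', if_neg (by omega : j ≠ k+2), if_neg (by omega : j+1 ≠ k+2)]
          rw [hcong]
          have hlast : segMin y γ (τ'' (k+1)) (τ'' (k+1+1)) ≤ segCost y γ (p+1) (n+1) α := by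
            simp only [hτ'', if_neg (by omega : k+1 ≠ k+2), if_pos rfl]
            rw [hseg.2.1]
            exact segMin_le y γ (p+1) (n+1) hα
          have hsum : ∑ j ∈ Finset.range (k+1), segMin y γ (τ j) (τ (j+1))
              ≤ ∑ j ∈ Finset.range (k+1), segCost y γ (τ j) (τ (j+1)) (a j) :=
            Finset.sum_le_sum fun j hj =>
              segMin_le y γ _ _ (ha j (by rw [Finset.mem_range] at hj; omega))
          push_cast
          linarith
        linarith
      linarith
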